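/- Upper bound on the Morse index of T^α_{1,k} in the full space, case α < 0: Let N ≥ 3 be an integer, α < 0 and k ∈ {1,…,⌊(N−1)/2⌋}. Then the Morse index of T^α_{1,k} on L²(G) is at most k+1; that is, every linear subspace of dom(T^α_{1,k}) on which the quadratic form V ↦ ⟨T^α_{1,k}V, V⟩_{L²(G)} is negative definite has dimension at most k+1. -/

import Mathlib

open MeasureTheory Set Filter

noncomputable section

def mu : Measure ℝ := volume.restrict (Set.Ioi (0:ℝ))

def MemL2 (f : ℝ → ℂ) : Prop := MeasureTheory.MemLp f 2 mu

def MemH1 (f : ℝ → ℂ) : Prop :=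
  ContinuousOn f (Set.Ici (0:ℝ)) ∧ (∀ x ∈ Set.Ioi (0:ℝ), DifferentiableAt ℝ f x) ∧
    MemL2 f ∧ MemL2 (deriv f)

def MemH2 (f : ℝ → ℂ) : Prop :=
  MemH1 f ∧ ContinuousOn (deriv f) (Set.Ici (0:ℝ)) ∧
    (∀ x ∈ Set.Ioi (0:ℝ), DifferentiableAt ℝ (deriv f) x) ∧ MemL2 (deriv (deriv f))

def MemW1 (f : ℝ → ℂ) : Prop := MemH1 f ∧ MemL2 (fun x => (x : ℂ) * f x)

def MemW2 (f : ℝ → ℂ) : Prop := MemH2 f ∧ MemL2 (fun x => ((x : ℂ))^2 * f x)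

def domDelta (N : ℕ) (α : ℝ) (V : Fin N → ℝ → ℂ) : Prop :=
  (∀ j, MemW2 (V j)) ∧ (∀ j j', V j 0 = V j' 0) ∧
    (∀ j₀, (∑ j, deriv (V j) 0) = (α : ℂ) * V j₀ 0)

def pot (N k : ℕ) (α c : ℝ) (j : Fin N) (x : ℝ) : ℝ :=
  if (j : ℕ) < k then (x - α/(2*(k:ℝ) - (N:ℝ)))^2 - c else (x + α/(2*(k:ℝ) - (N:ℝ)))^2 - c

def Tlin (N k : ℕ) (α c : ℝ) (V : Fin N → ℝ → ℂ) (j : Fin N) (x : ℝ) : ℂ :=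
  -(deriv (deriv (V j)) x) + (pot N k α c j x : ℂ) * V j x

def qf (N k : ℕ) (α c : ℝ) (V : Fin N → ℝ → ℂ) : ℝ :=
  (∑ j, ∫ x in Set.Ioi (0:ℝ), Tlin N k α c V j x * (starRingEnd ℂ) (V j x)).re

def memL2k (N k : ℕ) (V : Fin N → ℝ → ℂ) : Prop :=
  ∀ j j' : Fin N, (((j:ℕ) < k ∧ (j':ℕ) < k) ∨ (k ≤ (j:ℕ) ∧ k ≤ (j':ℕ))) → V j =ᵐ[mu] V j'

def phiProf (N k : ℕ) (α ω : ℝ) (j : Fin N) (x : ℝ) : ℝ :=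
  if (j : ℕ) < k then Real.exp ((ω+1)/2) * Real.exp (-(x - α/(2*(k:ℝ) - (N:ℝ)))^2/2)
  else Real.exp ((ω+1)/2) * Real.exp (-(x + α/(2*(k:ℝ) - (N:ℝ)))^2/2)


section AuxMorse

open Complex

theorem L2mul' {μ : Measure ℝ} {f g : ℝ → ℂ} (hf : MemLp f 2 μ) (hg : MemLp g 2 μ) :
    Integrable (fun x => f x * g x) μ := by
  rw [← memLp_one_iff_integrable]
  have h := hg.smul (φ := f) hf (r := 1)
  exact h

theorem L2conj' {μ : Measure ℝ} {f : ℝ → ℂ} (hf : MemLp f 2 μ) :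
    MemLp (fun x => (starRingEnd ℂ) (f x)) 2 μ := by
  refine hf.of_le ((Complex.continuous_conj).comp_aestronglyMeasurable hf.1) ?_
  filter_upwards with x
  simp

theorem L2xf' {μ : Measure ℝ} {f : ℝ → ℂ} (hf : MemLp f 2 μ)
    (hf2 : MemLp (fun x : ℝ => ((x:ℂ))^2 * f x) 2 μ) : MemLp (fun x : ℝ => (x:ℂ) * f x) 2 μ := by
  have hm : AEStronglyMeasurable (fun x : ℝ => (x:ℂ) * f x) μ :=
    (Complex.continuous_ofReal.aestronglyMeasurable).mul hf.1
  refine MemLp.of_le (hf.norm.add hf2.norm) hm ?_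
  filter_upwards with x
  rcases le_total (|x|) 1 with h | h
  · have h1 : ‖(x:ℂ) * f x‖ ≤ ‖f x‖ := by
      rw [norm_mul]
      calc ‖(x:ℂ)‖ * ‖f x‖ ≤ 1 * ‖f x‖ := by
            apply mul_le_mul_of_nonneg_right _ (norm_nonneg _)
            simpa using h
        _ = ‖f x‖ := one_mul _
    calc ‖(x:ℂ) * f x‖ ≤ ‖f x‖ := h1
      _ ≤ |‖f x‖ + ‖(x:ℂ)^2 * f x‖| := by
          rw [_root_.abs_of_nonneg (by positivity)]; nlinarith [norm_nonneg ((x:ℂ)^2 * f x)]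
  · have h1 : ‖(x:ℂ) * f x‖ ≤ ‖(x:ℂ)^2 * f x‖ := by
      rw [norm_mul, norm_mul, norm_pow]
      have hx : ‖(x:ℂ)‖ = |x| := by simp
      rw [hx]
      nlinarith [norm_nonneg (f x), abs_nonneg x,
        mul_le_mul_of_nonneg_right h (mul_nonneg (abs_nonneg x) (norm_nonneg (f x)))]
    calc ‖(x:ℂ) * f x‖ ≤ ‖(x:ℂ)^2 * f x‖ := h1
      _ ≤ |‖f x‖ + ‖(x:ℂ)^2 * f x‖| := by
          rw [_root_.abs_of_nonneg (by positivity)]; nlinarith [norm_nonneg (f x)]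

/-- All the facts we need about one edge function. -/
structure EdgeHyp (u : ℝ → ℂ) : Prop where
  cont : ContinuousOn u (Set.Ici 0)
  diff : ∀ x ∈ Set.Ioi (0:ℝ), DifferentiableAt ℝ u x
  l2 : MemL2 u
  dcont : ContinuousOn (deriv u) (Set.Ici 0)
  ddiff : ∀ x ∈ Set.Ioi (0:ℝ), DifferentiableAt ℝ (deriv u) x
  dl2 : MemL2 (deriv u)
  ddl2 : MemL2 (deriv (deriv u))
  x2l2 : MemL2 (fun x : ℝ => ((x:ℂ))^2 * u x)

theorem MemW2.edgeHyp {u : ℝ → ℂ} (h : MemW2 u) : EdgeHyp u :=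
  ⟨h.1.1.1, h.1.1.2.1, h.1.1.2.2.1, h.1.2.1, h.1.2.2.1, h.1.1.2.2.2, h.1.2.2.2, h.2⟩

namespace EdgeHyp

variable {u : ℝ → ℂ}

theorem xl2 (E : EdgeHyp u) : MemL2 (fun x : ℝ => (x:ℂ) * u x) := L2xf' E.l2 E.x2l2

theorem int_dd_conj (E : EdgeHyp u) : Integrable (fun x => deriv (deriv u) x * (starRingEnd ℂ) (u x)) mu :=
  L2mul' E.ddl2 (L2conj' E.l2)

theorem int_du_conj (E : EdgeHyp u) : Integrable (fun x => deriv u x * (starRingEnd ℂ) (u x)) mu :=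
  L2mul' E.dl2 (L2conj' E.l2)

theorem int_m (E : EdgeHyp u) : Integrable (fun x => Complex.normSq (u x)) mu := by
  have h := (L2mul' E.l2 (L2conj' E.l2)).re
  simpa [Complex.mul_conj] using h

theorem int_xm (E : EdgeHyp u) : Integrable (fun x => x * Complex.normSq (u x)) mu := by
  have h := (L2mul' E.xl2 (L2conj' E.l2)).re
  have e : ∀ x : ℝ, ((x:ℂ) * u x * (starRingEnd ℂ) (u x)).re = x * Complex.normSq (u x) := by
    intro x
    rw [mul_assoc, Complex.mul_conj, ← Complex.ofReal_mul, Complex.ofReal_re]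
  exact h.congr (Filter.Eventually.of_forall e)

theorem int_x2m (E : EdgeHyp u) : Integrable (fun x => x^2 * Complex.normSq (u x)) mu := by
  have h := (L2mul' E.x2l2 (L2conj' E.l2)).re
  have e : ∀ x : ℝ, ((x:ℂ)^2 * u x * (starRingEnd ℂ) (u x)).re = x^2 * Complex.normSq (u x) := by
    intro x
    rw [mul_assoc, Complex.mul_conj, ← Complex.ofReal_pow, ← Complex.ofReal_mul,
      Complex.ofReal_re]
  exact h.congr (Filter.Eventually.of_forall e)

end EdgeHyp

end AuxMorse
section AuxMorse2
open Complex

def phiF (b x : ℝ) : ℝ := (x - b)⁻¹ - (x - b)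

def BF (b : ℝ) (u : ℝ → ℂ) (x : ℝ) : ℝ :=
  phiF b x * Complex.normSq (u x) - (deriv u x * (starRingEnd ℂ) (u x)).re

def gF (b : ℝ) (u : ℝ → ℂ) (x : ℝ) : ℝ :=
  ((-(deriv (deriv u) x) + (((x - b)^2 - 3 : ℝ) : ℂ) * u x) * (starRingEnd ℂ) (u x)).re

theorem gF_eq (b : ℝ) (u : ℝ → ℂ) (x : ℝ) :
    gF b u x = -((deriv (deriv u) x * (starRingEnd ℂ) (u x)).re)
      + ((x - b)^2 - 3) * Complex.normSq (u x) := by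
  have h : (((x - b)^2 - 3 : ℝ) : ℂ) * u x * (starRingEnd ℂ) (u x)
      = (((((x - b)^2 - 3) * Complex.normSq (u x) : ℝ)) : ℂ) := by
    rw [mul_assoc, Complex.mul_conj]
    push_cast
    ring
  unfold gF
  rw [add_mul, neg_mul, h, Complex.add_re, Complex.neg_re, Complex.ofReal_re]

/-- restriction from `mu` to a subset of `Ioi 0`, as a `volume` statement -/
theorem integrableOn_of_mu {E : Type*} [NormedAddCommGroup E] {f : ℝ → E}
    (h : Integrable f mu) {A : Set ℝ} (hA : MeasurableSet A) (hsub : A ⊆ Set.Ioi (0:ℝ)) :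
    IntegrableOn f A volume := by
  have h2 : IntegrableOn f A mu := h.integrableOn
  unfold IntegrableOn at h2 ⊢
  unfold mu at h2
  rwa [Measure.restrict_restrict hA, Set.inter_eq_left.mpr hsub] at h2

theorem EdgeHyp.int_g {u : ℝ → ℂ} (E : EdgeHyp u) (b : ℝ) : Integrable (gF b u) mu := by
  have e : gF b u = fun x => -((deriv (deriv u) x * (starRingEnd ℂ) (u x)).re)
      + (x^2 * Complex.normSq (u x) + (-2*b) * (x * Complex.normSq (u x))
        + (b^2 - 3) * Complex.normSq (u x)) := by
    funext x; rw [gF_eq]; ring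
  rw [e]
  exact (E.int_dd_conj.re.neg).add (((E.int_x2m.add (E.int_xm.const_mul (-2*b))).add
    (E.int_m.const_mul (b^2-3))))
section AuxMorse3
open Complex

theorem hasDerivAt_re_mul_conj {u : ℝ → ℂ} {x : ℝ} (hu : HasDerivAt u (deriv u x) x)
    (hdu : HasDerivAt (deriv u) (deriv (deriv u) x) x) :
    HasDerivAt (fun y => (deriv u y * (starRingEnd ℂ) (u y)).re)
      ((deriv (deriv u) x * (starRingEnd ℂ) (u x)).re + Complex.normSq (deriv u x)) x := by
  have hconj : HasDerivAt (fun y => (starRingEnd ℂ) (u y)) ((starRingEnd ℂ) (deriv u x)) x := by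
    simpa using hu.star
  have hprod := hdu.mul hconj
  have hre : HasDerivAt (fun y => (deriv u y * (starRingEnd ℂ) (u y)).re)
      ((deriv (deriv u) x * (starRingEnd ℂ) (u x) + deriv u x * (starRingEnd ℂ) (deriv u x)).re) x :=
    Complex.reCLM.hasFDerivAt.comp_hasDerivAt x hprod
  convert hre using 1
  simp [Complex.add_re, Complex.mul_conj]

theorem hasDerivAt_normSq {u : ℝ → ℂ} {x : ℝ} (hu : HasDerivAt u (deriv u x) x) :
    HasDerivAt (fun y => Complex.normSq (u y))
      (2 * (deriv u x * (starRingEnd ℂ) (u x)).re) x := by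
  have hconj : HasDerivAt (fun y => (starRingEnd ℂ) (u y)) ((starRingEnd ℂ) (deriv u x)) x := by
    simpa using hu.star
  have hprod := hu.mul hconj
  have hre := Complex.reCLM.hasFDerivAt.comp_hasDerivAt x hprod
  have hfun : (fun y => Complex.reCLM (u y * (starRingEnd ℂ) (u y)))
      = fun y => Complex.normSq (u y) := by
    funext y
    simp [Complex.mul_conj]
  have hre2 : HasDerivAt (fun y => Complex.normSq (u y))
      (Complex.reCLM (deriv u x * (starRingEnd ℂ) (u x) + u x * (starRingEnd ℂ) (deriv u x)))
      x := by
    rw [← hfun]; exact hre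
  convert hre2 using 1
  simp only [Complex.reCLM_apply, Complex.add_re, Complex.mul_re, Complex.conj_re,
    Complex.conj_im]
  ring

theorem hasDerivAt_phiF {b x : ℝ} (hx : x - b ≠ 0) :
    HasDerivAt (phiF b) (-((x-b)^2)⁻¹ - 1) x := by
  have h1 : HasDerivAt (fun y : ℝ => y - b) 1 x := (hasDerivAt_id x).sub_const b
  have h2 := h1.inv hx
  have h3 := h2.sub h1
  unfold phiF
  exact h3.congr_deriv (by ring)

theorem claim1 {u : ℝ → ℂ} (E : EdgeHyp u) {b s t : ℝ} (hs : 0 < s) (hst : s ≤ t)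
    (hbn : b ∉ Set.Icc s t) :
    BF b u t - BF b u s ≤ ∫ x in s..t, gF b u x := by
  have huIcc : Set.uIcc s t = Set.Icc s t := Set.uIcc_of_le hst
  have hIci : Set.Icc s t ⊆ Set.Ici (0:ℝ) := fun x hx => le_of_lt (lt_of_lt_of_le hs hx.1)
  have hIoi : ∀ x ∈ Set.Icc s t, x ∈ Set.Ioi (0:ℝ) := fun x hx => lt_of_lt_of_le hs hx.1
  have hne : ∀ x ∈ Set.Icc s t, x - b ≠ 0 := by
    intro x hx h
    exact hbn (by rwa [sub_eq_zero.mp h] at hx)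
  set F : ℝ → ℝ := fun y => (deriv u y * (starRingEnd ℂ) (u y)).re with hF
  set A : ℝ → ℝ := fun x => (deriv (deriv u) x * (starRingEnd ℂ) (u x)).re with hA
  set m : ℝ → ℝ := fun y => Complex.normSq (u y) with hm
  -- FTC for F
  have hFder : ∀ x ∈ Set.uIcc s t, HasDerivAt F (A x + Complex.normSq (deriv u x)) x := by
    intro x hx
    rw [huIcc] at hx
    exact hasDerivAt_re_mul_conj ((E.diff x (hIoi x hx)).hasDerivAt)
      ((E.ddiff x (hIoi x hx)).hasDerivAt)
  have hint1 : IntervalIntegrable A volume s t := by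
    rw [intervalIntegrable_iff, Set.uIoc_of_le hst]
    exact integrableOn_of_mu E.int_dd_conj.re measurableSet_Ioc
      (fun x hx => lt_of_lt_of_le hs (le_of_lt hx.1))
  have hcontdu : ContinuousOn (fun x => Complex.normSq (deriv u x)) (Set.Icc s t) :=
    Complex.continuous_normSq.comp_continuousOn (E.dcont.mono hIci)
  have hint2 : IntervalIntegrable (fun x => Complex.normSq (deriv u x)) volume s t := by
    apply ContinuousOn.intervalIntegrable
    rw [huIcc]; exact hcontdu
  have FTC1 : ∫ x in s..t, (A x + Complex.normSq (deriv u x)) = F t - F s :=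
    intervalIntegral.integral_eq_sub_of_hasDerivAt hFder (hint1.add hint2)
  -- FTC for H = phi * m
  have hHder : ∀ x ∈ Set.uIcc s t, HasDerivAt (fun y => phiF b y * m y)
      ((-((x-b)^2)⁻¹ - 1) * m x + phiF b x * (2 * F x)) x := by
    intro x hx
    rw [huIcc] at hx
    exact (hasDerivAt_phiF (hne x hx)).mul (hasDerivAt_normSq ((E.diff x (hIoi x hx)).hasDerivAt))
  have hcontm : ContinuousOn m (Set.Icc s t) :=
    Complex.continuous_normSq.comp_continuousOn (E.cont.mono hIci)
  have hcontF : ContinuousOn F (Set.Icc s t) :=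
    Complex.continuous_re.comp_continuousOn ((E.dcont.mono hIci).mul
      (Complex.continuous_conj.comp_continuousOn (E.cont.mono hIci)))
  have hcontphi : ContinuousOn (phiF b) (Set.Icc s t) := by
    apply ContinuousOn.sub
    · exact ((continuousOn_id.sub continuousOn_const)).inv₀ hne
    · exact continuousOn_id.sub continuousOn_const
  have hcontphi' : ContinuousOn (fun x : ℝ => -((x-b)^2)⁻¹ - 1) (Set.Icc s t) := by
    apply ContinuousOn.sub _ continuousOn_const
    apply ContinuousOn.neg
    apply ContinuousOn.inv₀
    · exact ((continuousOn_id.sub continuousOn_const)).pow 2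
    · intro x hx
      exact pow_ne_zero 2 (hne x hx)
  have hint3 : IntervalIntegrable (fun x => (-((x-b)^2)⁻¹ - 1) * m x + phiF b x * (2 * F x))
      volume s t := by
    apply ContinuousOn.intervalIntegrable
    rw [huIcc]
    exact (hcontphi'.mul hcontm).add (hcontphi.mul (hcontF.const_smul (2:ℝ)))
  have FTC2 : ∫ x in s..t, ((-((x-b)^2)⁻¹ - 1) * m x + phiF b x * (2 * F x))
      = phiF b t * m t - phiF b s * m s :=
    intervalIntegral.integral_eq_sub_of_hasDerivAt hHder hint3
  -- remainder term R
  set R : ℝ → ℝ := fun x => Complex.normSq (deriv u x - (phiF b x : ℂ) * u x) with hR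
  have hcontR : ContinuousOn R (Set.Icc s t) := by
    apply Complex.continuous_normSq.comp_continuousOn
    apply ContinuousOn.sub (E.dcont.mono hIci)
    exact (Complex.continuous_ofReal.comp_continuousOn hcontphi).mul (E.cont.mono hIci)
  have hintR : IntervalIntegrable R volume s t := by
    apply ContinuousOn.intervalIntegrable; rw [huIcc]; exact hcontR
  have hRpos : 0 ≤ ∫ x in s..t, R x := by
    apply intervalIntegral.integral_nonneg hst
    intro x _
    exact Complex.normSq_nonneg _
  -- pointwise identity
  have hkey : Set.EqOn (gF b u) (fun x => -(A x + Complex.normSq (deriv u x))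
      + (((-((x-b)^2)⁻¹ - 1) * m x + phiF b x * (2 * F x)) + R x)) (Set.uIcc s t) := by
    intro x hx
    rw [huIcc] at hx
    have hxb := hne x hx
    have hRval : R x = Complex.normSq (deriv u x) + (phiF b x)^2 * m x - 2 * phiF b x * F x := by
      rw [hR]
      simp only []
      rw [Complex.normSq_sub]
      have e1 : deriv u x * (starRingEnd ℂ) ((phiF b x : ℂ) * u x)
          = (phiF b x : ℂ) * (deriv u x * (starRingEnd ℂ) (u x)) := by
        rw [map_mul, Complex.conj_ofReal]; ring
      rw [e1, Complex.re_ofReal_mul, Complex.normSq_mul, Complex.normSq_ofReal]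
      rw [hF, hm]
      ring
    have hpot : ((x - b)^2 - 3) = ((-((x-b)^2)⁻¹ - 1) + (phiF b x)^2) := by
      unfold phiF
      field_simp
      ring
    rw [gF_eq, hpot]
    show _ = -(A x + Complex.normSq (deriv u x))
      + (((-((x-b)^2)⁻¹ - 1) * m x + phiF b x * (2 * F x)) + R x)
    rw [hRval]
    simp only [hA, hm, hF]
    ring
  have hint12n : IntervalIntegrable (fun x => -(A x + Complex.normSq (deriv u x)))
      volume s t := by
    have h := (hint1.add hint2).neg
    simpa [Pi.neg_def] using h
  rw [intervalIntegral.integral_congr hkey]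
  rw [intervalIntegral.integral_add hint12n (hint3.add hintR),
    intervalIntegral.integral_add hint3 hintR,
    intervalIntegral.integral_neg, FTC1, FTC2]
  have hBt : BF b u t = phiF b t * m t - F t := rfl
  have hBs : BF b u s = phiF b s * m s - F s := rfl
  rw [hBt, hBs]
  linarith [hRpos]

end AuxMorse3
section AuxMorse4
open Complex Topology

theorem freq_small {W : ℝ → ℝ} (hW : Integrable W mu) (hnn : ∀ x ∈ Set.Ioi (0:ℝ), 0 ≤ W x)
    {ε : ℝ} (hε : 0 < ε) : ∃ᶠ t in atTop, W t < ε := by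
  by_contra hcon
  rw [Filter.not_frequently] at hcon
  obtain ⟨M, hM⟩ := Filter.eventually_atTop.mp hcon
  set M' := max M 1 with hM'
  have hsub : Set.Ioi M' ⊆ Set.Ioi (0:ℝ) := fun x hx =>
    lt_of_lt_of_le (lt_of_lt_of_le zero_lt_one (le_max_right M 1)) (le_of_lt hx)
  have hfin := hW.measure_ge_lt_top hε
  have hle : mu (Set.Ioi M') ≤ mu {x | ε ≤ W x} := by
    apply measure_mono
    intro x hx
    exact not_lt.mp (hM x (le_of_lt (lt_of_le_of_lt (le_max_left M 1) hx)))
  have hmu : mu (Set.Ioi M') = ⊤ := by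
    unfold mu
    rw [Measure.restrict_apply measurableSet_Ioi, Set.inter_eq_left.mpr hsub]
    exact Real.volume_Ioi
  rw [hmu] at hle
  exact absurd (lt_of_le_of_lt (le_top.trans_eq (top_le_iff.mp hle).symm) hfin) (lt_irrefl _)

theorem BF_tendsto_zero {u : ℝ → ℂ} (E : EdgeHyp u) {b : ℝ} (hb : b ≠ 0) (h0 : u 0 = 0) :
    Tendsto (BF b u) (𝓝[>] (0:ℝ)) (𝓝 0) := by
  have hmono : 𝓝[>] (0:ℝ)  ≤ 𝓝[Set.Ici (0:ℝ)] 0 := nhdsWithin_mono 0 Set.Ioi_subset_Ici_self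
  have h1 : Tendsto u (𝓝[>] (0:ℝ)) (𝓝 0) := by
    have h := (E.cont 0 Set.self_mem_Ici)
    rw [ContinuousWithinAt, h0] at h
    exact h.mono_left hmono
  have h2 : Tendsto (deriv u) (𝓝[>] (0:ℝ)) (𝓝 (deriv u 0)) :=
    (E.dcont 0 Set.self_mem_Ici).mono_left hmono
  have h3 : Tendsto (phiF b) (𝓝[>] (0:ℝ)) (𝓝 (phiF b 0)) := by
    apply Tendsto.mono_left _ nhdsWithin_le_nhds
    have : ContinuousAt (phiF b) 0 := by
      apply ContinuousAt.sub
      · exact (continuousAt_id.sub continuousAt_const).inv₀ (by simpa using hb)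
      · exact continuousAt_id.sub continuousAt_const
    exact this
  have hm : Tendsto (fun s => Complex.normSq (u s)) (𝓝[>] (0:ℝ)) (𝓝 0) := by
    have := (Complex.continuous_normSq.tendsto 0).comp h1
    simpa only [Function.comp_def, map_zero] using this
  have hconj : Tendsto (fun s => (starRingEnd ℂ) (u s)) (𝓝[>] (0:ℝ)) (𝓝 0) := by
    have := (Complex.continuous_conj.tendsto 0).comp h1
    simpa only [Function.comp_def, map_zero] using this
  have hprod : Tendsto (fun s => (deriv u s * (starRingEnd ℂ) (u s)).re) (𝓝[>] (0:ℝ)) (𝓝 0) := by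
    have hmc := h2.mul hconj
    rw [mul_zero] at hmc
    have := (Complex.continuous_re.tendsto 0).comp hmc
    simpa only [Function.comp_def, Complex.zero_re] using this
  have hfin := (h3.mul hm).sub hprod
  rw [mul_zero, sub_zero] at hfin
  exact hfin

theorem BF_tendsto_zero_at_b {u : ℝ → ℂ} (E : EdgeHyp u) {b : ℝ} (hb : 0 < b) (hvb : u b = 0) :
    Tendsto (BF b u) (𝓝[≠] b) (𝓝 0) := by
  have hd : HasDerivAt u (deriv u b) b := (E.diff b hb).hasDerivAt
  have hslope : Tendsto (slope u b) (𝓝[≠] b) (𝓝 (deriv u b)) :=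
    hasDerivAt_iff_tendsto_slope.mp hd
  have hcu : Tendsto u (𝓝[≠] b) (𝓝 0) := by
    have h := ((E.diff b hb).continuousAt).tendsto
    rw [hvb] at h
    exact h.mono_left nhdsWithin_le_nhds
  have hconj : Tendsto (fun t => (starRingEnd ℂ) (u t)) (𝓝[≠] b) (𝓝 0) := by
    have := (Complex.continuous_conj.tendsto 0).comp hcu
    simpa only [Function.comp_def, map_zero] using this
  have hcdu : Tendsto (deriv u) (𝓝[≠] b) (𝓝 (deriv u b)) := by
    have : ContinuousAt (deriv u) b := E.dcont.continuousAt (Ici_mem_nhds hb)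
    exact this.tendsto.mono_left nhdsWithin_le_nhds
  have hid : Tendsto (fun t : ℝ => t - b) (𝓝[≠] b) (𝓝 0) := by
    have : Tendsto (fun t : ℝ => t - b) (𝓝 b) (𝓝 (b - b)) :=
      (continuous_id.sub continuous_const).tendsto b
    rw [sub_self] at this
    exact this.mono_left nhdsWithin_le_nhds
  -- the three pieces
  have hp1 : Tendsto (fun t => ((slope u b t) * (starRingEnd ℂ) (u t)).re) (𝓝[≠] b) (𝓝 0) := by
    have hmc := hslope.mul hconj
    rw [mul_zero] at hmc
    have := (Complex.continuous_re.tendsto 0).comp hmc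
    simpa only [Function.comp_def, Complex.zero_re] using this
  have hp2 : Tendsto (fun t => (t - b) * Complex.normSq (u t)) (𝓝[≠] b) (𝓝 0) := by
    have hm : Tendsto (fun t => Complex.normSq (u t)) (𝓝[≠] b) (𝓝 0) := by
      have := (Complex.continuous_normSq.tendsto 0).comp hcu
      simpa only [Function.comp_def, map_zero] using this
    have hfin := hid.mul hm
    rw [mul_zero] at hfin
    exact hfin
  have hp3 : Tendsto (fun t => (deriv u t * (starRingEnd ℂ) (u t)).re) (𝓝[≠] b) (𝓝 0) := by
    have hmc := hcdu.mul hconj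
    rw [mul_zero] at hmc
    have := (Complex.continuous_re.tendsto 0).comp hmc
    simpa only [Function.comp_def, Complex.zero_re] using this
  have hcomb := (hp1.sub hp2).sub hp3
  rw [show ((0:ℝ) - 0 - 0 : ℝ) = 0 by ring] at hcomb
  apply hcomb.congr
  intro t
  show ((slope u b t) * (starRingEnd ℂ) (u t)).re - (t - b) * Complex.normSq (u t)
      - (deriv u t * (starRingEnd ℂ) (u t)).re = BF b u t
  have hs : slope u b t = ((t - b)⁻¹ : ℝ) • u t := by
    simp [slope, hvb]
  rw [hs]
  unfold BF phiF
  have : ((((t - b)⁻¹ : ℝ) • u t) * (starRingEnd ℂ) (u t)).re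
      = (t - b)⁻¹ * Complex.normSq (u t) := by
    rw [smul_mul_assoc]
    rw [Complex.real_smul, Complex.re_ofReal_mul, Complex.mul_conj]
    simp
  rw [this]
  ring

end AuxMorse4
section AuxMorse5
open Complex Topology

theorem W_bound {u : ℝ → ℂ} (E : EdgeHyp u) (b : ℝ) :
    Integrable (fun t => (1 + |b| + t) * Complex.normSq (u t)
      + ‖deriv u t‖ * ‖u t‖) mu := by
  have h1 : Integrable (fun t => ‖deriv u t‖ * ‖u t‖) mu := by
    have h := E.int_du_conj.norm
    refine h.congr (Filter.Eventually.of_forall fun t => ?_)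
    show ‖deriv u t * (starRingEnd ℂ) (u t)‖ = ‖deriv u t‖ * ‖u t‖
    rw [norm_mul, RCLike.norm_conj]
  have h2 : Integrable (fun t => (1 + |b| + t) * Complex.normSq (u t)) mu := by
    have e : (fun t => (1 + |b| + t) * Complex.normSq (u t))
        = fun t => (1 + |b|) * Complex.normSq (u t) + t * Complex.normSq (u t) := by
      funext t; ring
    rw [e]
    exact (E.int_m.const_mul (1 + |b|)).add E.int_xm
  exact h2.add h1

theorem BF_lower {u : ℝ → ℂ} {b t : ℝ} (ht : b + 1 ≤ t) (ht0 : 0 < t) :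
    -((1 + |b| + t) * Complex.normSq (u t) + ‖deriv u t‖ * ‖u t‖) ≤ BF b u t := by
  have htb : (1:ℝ) ≤ t - b := by linarith
  have h1 : |phiF b t| ≤ 1 + |b| + t := by
    unfold phiF
    have hp : (0:ℝ) < t - b := lt_of_lt_of_le zero_lt_one htb
    have hi : (t - b)⁻¹ ≤ 1 := by
      rw [inv_le_one_iff₀]
      right; exact htb
    have hi0 : 0 ≤ (t - b)⁻¹ := le_of_lt (inv_pos.mpr hp)
    have h2 : t - b ≤ t + |b| := by
      have := neg_abs_le b
      linarith
    rw [abs_le]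
    constructor <;> nlinarith [abs_nonneg b]
  have h2 : |(deriv u t * (starRingEnd ℂ) (u t)).re| ≤ ‖deriv u t‖ * ‖u t‖ := by
    calc |(deriv u t * (starRingEnd ℂ) (u t)).re| ≤ ‖deriv u t * (starRingEnd ℂ) (u t)‖ :=
          Complex.abs_re_le_norm _
      _ = ‖deriv u t‖ * ‖u t‖ := by rw [norm_mul, RCLike.norm_conj]
  have h3 : |phiF b t| * Complex.normSq (u t) ≤ (1 + |b| + t) * Complex.normSq (u t) :=
    mul_le_mul_of_nonneg_right h1 (Complex.normSq_nonneg _)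
  have h4 : -(|phiF b t| * Complex.normSq (u t)) ≤ phiF b t * Complex.normSq (u t) := by
    have := neg_abs_le (phiF b t)
    nlinarith [Complex.normSq_nonneg (u t), abs_nonneg (phiF b t)]
  unfold BF
  have := abs_le.mp h2
  nlinarith [Complex.normSq_nonneg (u t)]

theorem tail_nonneg {u : ℝ → ℂ} (E : EdgeHyp u) {b c : ℝ} (hc : 0 ≤ c) (hbc : b ≤ c)
    (hB : Tendsto (BF b u) (𝓝[>] c) (𝓝 0)) :
    0 ≤ ∫ x in Set.Ioi c, gF b u x := by
  -- Step A
  have stepA : ∀ s, c < s → -(BF b u s) ≤ ∫ x in Set.Ioi s, gF b u x := by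
    intro s hcs
    have hs0 : 0 < s := lt_of_le_of_lt hc hcs
    have hsub : Set.Ioi s ⊆ Set.Ioi (0:ℝ) := fun x hx => lt_trans hs0 hx
    have hgint : IntegrableOn (gF b u) (Set.Ioi s) volume :=
      integrableOn_of_mu (E.int_g b) measurableSet_Ioi hsub
    have hJ : Tendsto (fun t => ∫ x in s..t, gF b u x) atTop
        (𝓝 (∫ x in Set.Ioi s, gF b u x)) :=
      MeasureTheory.intervalIntegral_tendsto_integral_Ioi s hgint tendsto_id
    set I := ∫ x in Set.Ioi s, gF b u x with hI
    have key : ∀ ε, 0 < ε → -(BF b u s) - 2*ε ≤ I := by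
      intro ε hε
      have hfreq := freq_small (W_bound E b) (fun x hx => by
        have hx0 : (0:ℝ) < x := hx
        have h1 : (0:ℝ) ≤ 1 + |b| + x := by linarith [abs_nonneg b]
        have := mul_nonneg h1 (Complex.normSq_nonneg (u x))
        nlinarith [norm_nonneg (deriv u x), norm_nonneg (u x),
          mul_nonneg (norm_nonneg (deriv u x)) (norm_nonneg (u x))]) hε
      have hev1 : ∀ᶠ t in atTop, |(∫ x in s..t, gF b u x) - I| < ε := by
        have := hJ (Metric.ball_mem_nhds I hε)
        filter_upwards [this] with t ht
        simpa [Real.dist_eq] using ht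
      have hev2 : ∀ᶠ t in atTop, max (b+1) s ≤ t := eventually_ge_atTop _
      obtain ⟨t, htW, htJ, htge⟩ := (hfreq.and_eventually (hev1.and hev2)).exists
      have hst : s ≤ t := le_trans (le_max_right _ _) htge
      have hbt : b + 1 ≤ t := le_trans (le_max_left _ _) htge
      have ht0 : 0 < t := lt_of_lt_of_le hs0 hst
      have hbn : b ∉ Set.Icc s t := by
        intro hmem
        exact absurd hmem.1 (not_le.mpr (lt_of_le_of_lt hbc hcs))
      have hcl := claim1 E hs0 hst hbn
      have hlow := BF_lower (u := u) hbt ht0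
      have habs := abs_lt.mp htJ
      have hWt : (1 + |b| + t) * Complex.normSq (u t) + ‖deriv u t‖ * ‖u t‖ < ε := htW
      linarith
    by_contra hcon
    push_neg at hcon
    have h3 : 0 < (-(BF b u s) - I)/3 := by linarith
    have := key _ h3
    linarith
  -- Step B
  have hseq : Tendsto (fun n : ℕ => c + 1/(n+1)) atTop (𝓝[>] c) := by
    rw [tendsto_nhdsWithin_iff]
    constructor
    · have h := tendsto_one_div_add_atTop_nhds_zero_nat (𝕜 := ℝ)
      have := (tendsto_const_nhds (x := c) (f := atTop (α := ℕ))).add h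
      simpa using this
    · filter_upwards with n
      simp only [Set.mem_Ioi]
      have : (0:ℝ) < 1/((n:ℝ)+1) := by positivity
      linarith
  have hmono : Monotone (fun n : ℕ => Set.Ioi (c + 1/(n+1):ℝ)) := by
    intro n m hnm
    apply Set.Ioi_subset_Ioi
    have h1 : (1:ℝ)/(m+1) ≤ 1/(n+1) := by
      apply div_le_div_of_nonneg_left zero_le_one <;> [positivity; exact_mod_cast (by omega : n+1 ≤ m+1)]
    linarith
  have hunion : (⋃ n : ℕ, Set.Ioi (c + 1/(n+1):ℝ)) = Set.Ioi c := by
    ext x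
    simp only [Set.mem_iUnion, Set.mem_Ioi]
    constructor
    · rintro ⟨n, hn⟩
      have : (0:ℝ) < 1/(n+1) := by positivity
      linarith
    · intro hx
      obtain ⟨n, hn⟩ := exists_nat_one_div_lt (show (0:ℝ) < x - c by linarith)
      exact ⟨n, by push_cast at hn ⊢; linarith⟩
  have hIoiC : IntegrableOn (gF b u) (Set.Ioi c) volume := by
    rcases eq_or_lt_of_le hc with h | h
    · rw [← h]
      exact integrableOn_of_mu (E.int_g b) measurableSet_Ioi (by rfl)
    · exact integrableOn_of_mu (E.int_g b) measurableSet_Ioi (fun x hx => lt_trans h hx)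
  have htendI : Tendsto (fun n : ℕ => ∫ x in Set.Ioi (c + 1/(n+1):ℝ), gF b u x) atTop
      (𝓝 (∫ x in Set.Ioi c, gF b u x)) := by
    have := MeasureTheory.tendsto_setIntegral_of_monotone (fun n => measurableSet_Ioi) hmono
      (by rwa [hunion])
    rwa [hunion] at this
  have htendB : Tendsto (fun n : ℕ => -(BF b u (c + 1/(n+1):ℝ))) atTop (𝓝 0) := by
    have := (hB.comp hseq).neg
    simpa using this
  refine le_of_tendsto_of_tendsto' htendB htendI ?_
  intro n
  refine stepA _ ?_
  have : (0:ℝ) < 1/((n:ℝ)+1) := by positivity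
  linarith

end AuxMorse5
section AuxMorse6
open Complex Topology

theorem middle_nonneg {u : ℝ → ℂ} (E : EdgeHyp u) {b : ℝ} (hb : 0 < b)
    (hB0 : Tendsto (BF b u) (𝓝[>] (0:ℝ)) (𝓝 0))
    (hBb : Tendsto (BF b u) (𝓝[<] b) (𝓝 0)) :
    0 ≤ ∫ x in Set.Ioc (0:ℝ) b, gF b u x := by
  set s : ℕ → ℝ := fun n => (b/2) * (1/(n+1)) with hs
  have hs_pos : ∀ n, 0 < s n := fun n => by
    rw [hs]; positivity
  have hs_lt : ∀ n, s n ≤ b/2 := fun n => by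
    rw [hs]
    have h1 : (1:ℝ)/((n:ℝ)+1) ≤ 1 := by
      rw [div_le_one (by positivity)]; linarith [Nat.cast_nonneg (α := ℝ) n]
    nlinarith
  have hst : ∀ n, s n ≤ b - s n := fun n => by linarith [hs_lt n, hs_pos n]
  have htb : ∀ n, b - s n < b := fun n => by linarith [hs_pos n]
  have hs_tendsto : Tendsto s atTop (𝓝 0) := by
    rw [hs]
    have h := tendsto_one_div_add_atTop_nhds_zero_nat (𝕜 := ℝ)
    have := h.const_mul (b/2)
    simpa using this
  -- each piece
  have stepA : ∀ n : ℕ, BF b u (b - s n) - BF b u (s n)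
      ≤ ∫ x in Set.Ioc (s n) (b - s n), gF b u x := by
    intro n
    have hbn : b ∉ Set.Icc (s n) (b - s n) := by
      intro hmem
      have := hmem.2
      linarith [hs_pos n]
    have h := claim1 E (hs_pos n) (hst n) hbn
    rwa [intervalIntegral.integral_of_le (hst n)] at h
  -- limits
  have hmono : Monotone (fun n : ℕ => Set.Ioc (s n) (b - s n)) := by
    intro n m hnm
    have hsm : s m ≤ s n := by
      rw [hs]
      have h1 : (1:ℝ)/((m:ℝ)+1) ≤ 1/((n:ℝ)+1) := by
        apply div_le_div_of_nonneg_left zero_le_one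
        · positivity
        · exact_mod_cast (by omega : n+1 ≤ m+1)
      nlinarith
    exact Set.Ioc_subset_Ioc hsm (by linarith)
  have hunion : (⋃ n : ℕ, Set.Ioc (s n) (b - s n)) = Set.Ioo 0 b := by
    ext x
    simp only [Set.mem_iUnion, Set.mem_Ioc, Set.mem_Ioo]
    constructor
    · rintro ⟨n, h1, h2⟩
      exact ⟨lt_trans (hs_pos n) h1, lt_of_le_of_lt h2 (htb n)⟩
    · rintro ⟨hx1, hx2⟩
      have h1 : ∀ᶠ n in atTop, s n < x := hs_tendsto.eventually_lt_const hx1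
      have h2 : ∀ᶠ n in atTop, s n < b - x := hs_tendsto.eventually_lt_const (by linarith)
      obtain ⟨n, hn1, hn2⟩ := (h1.and h2).exists
      exact ⟨n, hn1, by linarith⟩
  have hIoo : IntegrableOn (gF b u) (Set.Ioo 0 b) volume :=
    integrableOn_of_mu (E.int_g b) measurableSet_Ioo (fun x hx => hx.1)
  have htendI : Tendsto (fun n : ℕ => ∫ x in Set.Ioc (s n) (b - s n), gF b u x) atTop
      (𝓝 (∫ x in Set.Ioo 0 b, gF b u x)) := by
    have := MeasureTheory.tendsto_setIntegral_of_monotone (fun n => measurableSet_Ioc) hmono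
      (by rwa [hunion])
    rwa [hunion] at this
  have hseq1 : Tendsto s atTop (𝓝[>] (0:ℝ)) := by
    rw [tendsto_nhdsWithin_iff]
    exact ⟨hs_tendsto, Filter.Eventually.of_forall fun n => hs_pos n⟩
  have hseq2 : Tendsto (fun n => b - s n) atTop (𝓝[<] b) := by
    rw [tendsto_nhdsWithin_iff]
    constructor
    · have := (tendsto_const_nhds (x := b) (f := atTop (α := ℕ))).sub hs_tendsto
      simpa using this
    · exact Filter.Eventually.of_forall fun n => htb n
  have htendB : Tendsto (fun n => BF b u (b - s n) - BF b u (s n)) atTop (𝓝 0) := by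
    have := (hBb.comp hseq2).sub (hB0.comp hseq1)
    simpa using this
  have h0 : 0 ≤ ∫ x in Set.Ioo 0 b, gF b u x :=
    le_of_tendsto_of_tendsto' htendB htendI stepA
  rwa [MeasureTheory.integral_Ioc_eq_integral_Ioo]

theorem edge_nonneg {u : ℝ → ℂ} (hW2 : MemW2 u) {b : ℝ} (hbne : b ≠ 0) (h0 : u 0 = 0)
    (hbval : 0 < b → u b = 0) :
    0 ≤ (∫ x in Set.Ioi (0:ℝ),
      (-(deriv (deriv u) x) + (((x - b)^2 - 3 : ℝ) : ℂ) * u x) * (starRingEnd ℂ) (u x)).re := by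
  have E := hW2.edgeHyp
  -- integrability of the complex integrand
  have hTl2 : MemLp (fun x : ℝ => -(deriv (deriv u) x) + (((x - b)^2 - 3 : ℝ) : ℂ) * u x) 2 mu := by
    have hpot : MemLp (fun x : ℝ => (((x - b)^2 - 3 : ℝ) : ℂ) * u x) 2 mu := by
      have e : (fun x : ℝ => (((x - b)^2 - 3 : ℝ) : ℂ) * u x)
          = fun x : ℝ => (x:ℂ)^2 * u x + ((-2*b : ℝ) : ℂ) * ((x:ℂ) * u x)
            + ((b^2 - 3 : ℝ) : ℂ) * u x := by
        funext x
        push_cast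
        ring
      rw [e]
      exact (E.x2l2.add (E.xl2.const_mul _)).add (E.l2.const_mul _)
    exact E.ddl2.neg.add hpot
  have hC : Integrable (fun x : ℝ =>
      (-(deriv (deriv u) x) + (((x - b)^2 - 3 : ℝ) : ℂ) * u x) * (starRingEnd ℂ) (u x)) mu :=
    L2mul' hTl2 (L2conj' E.l2)
  have hre : (∫ x in Set.Ioi (0:ℝ),
      (-(deriv (deriv u) x) + (((x - b)^2 - 3 : ℝ) : ℂ) * u x) * (starRingEnd ℂ) (u x)).re
      = ∫ x in Set.Ioi (0:ℝ), gF b u x := by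
    have h := integral_re hC
    exact h.symm
  rw [hre]
  rcases lt_or_gt_of_ne hbne with hneg | hpos
  · exact tail_nonneg E le_rfl (le_of_lt hneg) (BF_tendsto_zero E hbne h0)
  · have hsplit : ∫ x in Set.Ioi (0:ℝ), gF b u x
        = (∫ x in Set.Ioc (0:ℝ) b, gF b u x) + ∫ x in Set.Ioi b, gF b u x := by
      rw [← MeasureTheory.setIntegral_union (Set.Ioc_disjoint_Ioi le_rfl) measurableSet_Ioi
        (integrableOn_of_mu (E.int_g b) measurableSet_Ioc (fun x hx => hx.1))
        (integrableOn_of_mu (E.int_g b) measurableSet_Ioi (fun x hx => lt_trans hpos hx))]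
      rw [Set.Ioc_union_Ioi_eq_Ioi (le_of_lt hpos)]
    rw [hsplit]
    have hBb := BF_tendsto_zero_at_b E hpos (hbval hpos)
    have h1 := middle_nonneg E hpos (BF_tendsto_zero E hbne h0)
      (hBb.mono_left (nhdsWithin_mono b fun x hx => ne_of_lt hx))
    have h2 := tail_nonneg E (le_of_lt hpos) le_rfl
      (hBb.mono_left (nhdsWithin_mono b fun x hx => ne_of_gt hx))
    linarith

end AuxMorse6
/-- upper bound on the Morse index of `T^α_{1,k}` in the full space `L²(𝒢)`. -/
theorem morse_index_T1_upper_alpha_neg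
    (N k : ℕ) (hN : 3 ≤ N) (α : ℝ) (hα : α < 0) (hk1 : 1 ≤ k) (hk2 : k ≤ (N - 1) / 2) :
    ∀ S : Submodule ℂ (Fin N → ℝ → ℂ),
      (∀ V ∈ S, domDelta N α V) →
      (∀ V ∈ S, V ≠ 0 → qf N k α 3 V < 0) →
      Module.rank ℂ S ≤ ((k + 1 : ℕ) : Cardinal) := by
  intro S hdom hneg
  have h2k : 2 * k + 1 ≤ N := by omega
  have hkN : k < N := by omega
  have hN0 : 0 < N := by omega
  have hden : 2*(k:ℝ) - (N:ℝ) < 0 := by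
    have : (2*k+1 : ℝ) ≤ N := by exact_mod_cast h2k
    push_cast at this ⊢
    linarith
  set a : ℝ := α/(2*(k:ℝ) - (N:ℝ)) with ha
  have ha_pos : 0 < a := div_pos_of_neg_of_neg hα hden
  -- the linear functionals
  let Φ : (Fin N → ℝ → ℂ) →ₗ[ℂ] (Fin (k+1) → ℂ) :=
    { toFun := fun V i => if h : (i:ℕ) < k then V ⟨(i:ℕ), lt_trans h hkN⟩ a else V ⟨0, hN0⟩ 0
      map_add' := fun U V => by
        funext i
        by_cases h : (i:ℕ) < k <;> simp [h]
      map_smul' := fun c V => by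
        funext i
        by_cases h : (i:ℕ) < k <;> simp [h] }
  -- key: if V ∈ S and Φ V = 0 then V = 0
  have hker : ∀ V ∈ S, Φ V = 0 → V = 0 := by
    intro V hV hΦ
    by_contra hVne
    have hq := hneg V hV hVne
    have hd := hdom V hV
    -- boundary values
    have hV00 : V ⟨0, hN0⟩ 0 = 0 := by
      have h := congrFun hΦ ⟨k, lt_add_one k⟩
      simp only [Φ, LinearMap.coe_mk, AddHom.coe_mk, Pi.zero_apply] at h
      rwa [dif_neg (lt_irrefl k)] at h
    have hV0 : ∀ j : Fin N, V j 0 = 0 := fun j => (hd.2.1 j ⟨0, hN0⟩).trans hV00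
    have hVa : ∀ j : Fin N, (j:ℕ) < k → V j a = 0 := by
      intro j hj
      have := congrFun hΦ ⟨(j:ℕ), by omega⟩
      simp only [Φ, LinearMap.coe_mk, AddHom.coe_mk, Pi.zero_apply] at this
      rw [dif_pos hj] at this
      rwa [show (⟨(j:ℕ), lt_trans hj hkN⟩ : Fin N) = j from Fin.ext rfl] at this
    -- each edge term is nonnegative
    have hterm : ∀ j : Fin N,
        0 ≤ (∫ x in Set.Ioi (0:ℝ), Tlin N k α 3 V j x * (starRingEnd ℂ) (V j x)).re := by
      intro j
      by_cases hj : (j:ℕ) < k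
      · have he : (fun x => Tlin N k α 3 V j x * (starRingEnd ℂ) (V j x))
            = fun x => (-(deriv (deriv (V j)) x) + (((x - a)^2 - 3 : ℝ) : ℂ) * V j x)
              * (starRingEnd ℂ) (V j x) := by
          funext x
          unfold Tlin pot
          rw [if_pos hj]
        rw [he]
        exact edge_nonneg (hd.1 j) (ne_of_gt ha_pos) (hV0 j) (fun _ => hVa j hj)
      · have he : (fun x => Tlin N k α 3 V j x * (starRingEnd ℂ) (V j x))
            = fun x => (-(deriv (deriv (V j)) x) + (((x - (-a))^2 - 3 : ℝ) : ℂ) * V j x)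
              * (starRingEnd ℂ) (V j x) := by
          funext x
          unfold Tlin pot
          rw [if_neg hj,
            show (x + α/(2*(k:ℝ) - (N:ℝ)))^2 - 3 = (x - (-a))^2 - 3 from by rw [ha]; ring]
        rw [he]
        exact edge_nonneg (hd.1 j) (neg_ne_zero.mpr (ne_of_gt ha_pos)) (hV0 j)
          (fun hcon => absurd hcon (not_lt.mpr (by linarith)))
    have hq' : 0 ≤ qf N k α 3 V := by
      unfold qf
      rw [Complex.re_sum]
      exact Finset.sum_nonneg fun j _ => hterm j
    linarith
  -- injectivity and rank bound
  have hinj : Function.Injective (Φ.comp S.subtype) := by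
    rw [← LinearMap.ker_eq_bot]
    rw [Submodule.eq_bot_iff]
    intro v hv
    have h0 : (v : Fin N → ℝ → ℂ) = 0 := hker _ v.2 hv
    exact Subtype.ext h0
  have := LinearMap.rank_le_of_injective _ hinj
  calc Module.rank ℂ S ≤ Module.rank ℂ (Fin (k+1) → ℂ) := this
    _ = ((k + 1 : ℕ) : Cardinal) := rank_fin_fun (k+1)
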